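/- Asynchronous incremental voting on K_n with three consecutive opinions, exact product recursion: suppose X_v(0) ∈ {1,2,3} for all v. Then for every t ≥ 0, E[N₁(t+1)·N₃(t+1) | X(t)] = (1 − (N₁(t)+N₃(t))/n²)·N₁(t)·N₃(t). -/
import Mathlib


/-!
STATEMENT 15: Asynchronous incremental voting on `K_n` with three consecutive opinions,
exact product recursion: if all opinions lie in `{1,2,3}`, then for every `t ≥ 0`,
`E[N₁(t+1)·N₃(t+1) | X(t)] = (1 − (N₁(t)+N₃(t))/n²)·N₁(t)·N₃(t)`.

Since the process is a time-homogeneous Markov chain and opinions stay in `{1,2,3}`,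
this is formalized as the corresponding equality for the one-step transition
distribution from an arbitrary configuration with opinions in `{1,2,3}`.
-/

namespace KnAsync15

/-- The incremental voting update rule. -/
def updateRule (a b : ℤ) : ℤ := if a < b then a + 1 else if b < a then a - 1 else a

/-- Expected value of a real-valued function under a probability mass function. -/
noncomputable def expVal {α : Type*} (p : PMF α) (f : α → ℝ) : ℝ :=
  ∑' a, (p a).toReal * f a

/-- One step of asynchronous incremental voting on `K_n`: a uniformly random pair
`(v, w)` is chosen and vertex `v` updates using `w`'s opinion. -/
noncomputable def step (n : ℕ) [NeZero n] (x : Fin n → ℤ) : PMF (Fin n → ℤ) :=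
  (PMF.uniformOfFintype (Fin n × Fin n)).map
    fun p => Function.update x p.1 (updateRule (x p.1) (x p.2))

/-- `count n i x` is `N_i`: the number of vertices holding opinion `i`. -/
def count (n : ℕ) (i : ℤ) (x : Fin n → ℤ) : ℕ :=
  (Finset.univ.filter fun v => x v = i).card

/-- Expected value under the pushforward of a uniform distribution is the average. -/
lemma expVal_map_uniform {α β : Type*} [Fintype α] [Nonempty α] (g : α → β) (f : β → ℝ) :
    expVal ((PMF.uniformOfFintype α).map g) f = (Fintype.card α : ℝ)⁻¹ * ∑ a, f (g a) := by
  classical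
  unfold expVal
  have h2 : ∀ y, (((PMF.uniformOfFintype α).map g) y).toReal * f y
      = ∑ a : α, if y = g a then (Fintype.card α : ℝ)⁻¹ * f (g a) else 0 := by
    intro y
    have h1 : (((PMF.uniformOfFintype α).map g) y).toReal
        = ∑ a : α, if y = g a then (Fintype.card α : ℝ)⁻¹ else 0 := by
      rw [PMF.map_apply, tsum_fintype, ENNReal.toReal_sum]
      · refine Finset.sum_congr rfl fun a _ => ?_
        split
        · simp [PMF.uniformOfFintype_apply, ENNReal.toReal_inv]
        · simp
      · intro a _
        split
        · simp [PMF.uniformOfFintype_apply]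
        · simp
    rw [h1, Finset.sum_mul]
    refine Finset.sum_congr rfl fun a _ => ?_
    split
    · next h => rw [h]
    · simp
  calc (∑' y, (((PMF.uniformOfFintype α).map g) y).toReal * f y)
      = ∑' y, ∑ a : α, (if y = g a then (Fintype.card α : ℝ)⁻¹ * f (g a) else 0) :=
        tsum_congr h2
    _ = ∑ a : α, ∑' y, (if y = g a then (Fintype.card α : ℝ)⁻¹ * f (g a) else 0) :=
        Summable.tsum_finsetSum (fun a _ => ⟨_, hasSum_ite_eq _ _⟩)
    _ = ∑ a : α, (Fintype.card α : ℝ)⁻¹ * f (g a) := by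
        refine Finset.sum_congr rfl fun a _ => ?_
        exact tsum_ite_eq _ _
    _ = _ := by rw [Finset.mul_sum]

lemma count_cast (n : ℕ) (i : ℤ) (x : Fin n → ℤ) :
    (count n i x : ℝ) = ∑ v : Fin n, if x v = i then 1 else 0 := by
  rw [count, Finset.card_filter]
  push_cast
  simp

/-- How `count` changes under a single-site update. -/
lemma count_update (n : ℕ) (i c : ℤ) (x : Fin n → ℤ) (v : Fin n) :
    (count n i (Function.update x v c) : ℝ) =
      (count n i x : ℝ) + (if c = i then 1 else 0) - (if x v = i then 1 else 0) := by
  rw [count_cast, count_cast]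
  rw [← Finset.add_sum_erase _ _ (Finset.mem_univ v),
      ← Finset.add_sum_erase _ (fun u => if x u = i then (1:ℝ) else 0) (Finset.mem_univ v)]
  have h : (∑ u ∈ Finset.univ.erase v, if Function.update x v c u = i then (1:ℝ) else 0)
      = ∑ u ∈ Finset.univ.erase v, if x u = i then (1:ℝ) else 0 := by
    refine Finset.sum_congr rfl fun u hu => ?_
    rw [Function.update_of_ne (Finset.ne_of_mem_erase hu)]
  rw [h, Function.update_self]
  ring

/-- Sums of functions of opinions can be computed fiberwise over `{1,2,3}`. -/
lemma sum_fiber (n : ℕ) (x : Fin n → ℤ) (hx : ∀ v, x v ∈ ({1, 2, 3} : Set ℤ)) (g : ℤ → ℝ) :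
    ∑ v : Fin n, g (x v) = ∑ i ∈ ({1,2,3} : Finset ℤ), (count n i x : ℝ) * g i := by
  classical
  rw [← Finset.sum_fiberwise_of_maps_to (g := x) (t := ({1,2,3} : Finset ℤ))
      (fun v _ => by simpa using hx v) (fun v => g (x v))]
  refine Finset.sum_congr rfl fun i _ => ?_
  have h : ∀ u ∈ Finset.univ.filter (fun v => x v = i), g (x u) = g i := by
    intro u hu
    rw [(Finset.mem_filter.mp hu).2]
  rw [Finset.sum_congr rfl h, Finset.sum_const, count, nsmul_eq_mul]

/-- **Exact one-step recursion for `N₁·N₃` under asynchronous incremental voting on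
`K_n` with opinions in `{1,2,3}`**:
`E[N₁'·N₃' | X] = (1 − (N₁+N₃)/n²)·N₁·N₃`. -/
theorem product_recursion_three_opinions_async
    (n : ℕ) [NeZero n] (x : Fin n → ℤ) (hx : ∀ v, x v ∈ ({1, 2, 3} : Set ℤ)) :
    expVal (step n x) (fun y => (count n 1 y : ℝ) * (count n 3 y : ℝ)) =
      (1 - ((count n 1 x : ℝ) + (count n 3 x : ℝ)) / (n : ℝ) ^ 2) *
        ((count n 1 x : ℝ) * (count n 3 x : ℝ)) := by
  classical
  have hn : (n : ℝ) ≠ 0 := Nat.cast_ne_zero.mpr (NeZero.ne n)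
  have habc : (count n 1 x : ℝ) + (count n 2 x : ℝ) + (count n 3 x : ℝ) = n := by
    have h := sum_fiber n x hx (fun _ => (1:ℝ))
    simp only [Finset.sum_const, Finset.card_univ, Fintype.card_fin, nsmul_eq_mul, mul_one] at h
    rw [Finset.sum_insert (by decide), Finset.sum_insert (by decide),
        Finset.sum_singleton] at h
    linarith [h]
  rw [step, expVal_map_uniform, Fintype.sum_prod_type]
  simp only [count_update]
  rw [sum_fiber n x hx (fun i => ∑ w : Fin n,
      ((count n 1 x : ℝ) + (if updateRule i (x w) = 1 then 1 else 0) - (if i = 1 then 1 else 0)) *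
      ((count n 3 x : ℝ) + (if updateRule i (x w) = 3 then 1 else 0) - (if i = 3 then 1 else 0)))]
  have hinner : ∀ i ∈ ({1,2,3} : Finset ℤ), (count n i x : ℝ) * (∑ w : Fin n,
      ((count n 1 x : ℝ) + (if updateRule i (x w) = 1 then 1 else 0) - (if i = 1 then 1 else 0)) *
      ((count n 3 x : ℝ) + (if updateRule i (x w) = 3 then 1 else 0) - (if i = 3 then 1 else 0)))
      = (count n i x : ℝ) * (∑ j ∈ ({1,2,3} : Finset ℤ), (count n j x : ℝ) *
      (((count n 1 x : ℝ) + (if updateRule i j = 1 then 1 else 0) - (if i = 1 then 1 else 0)) *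
      ((count n 3 x : ℝ) + (if updateRule i j = 3 then 1 else 0) - (if i = 3 then 1 else 0)))) := by
    intro i _
    rw [sum_fiber n x hx (fun j =>
      ((count n 1 x : ℝ) + (if updateRule i j = 1 then 1 else 0) - (if i = 1 then 1 else 0)) *
      ((count n 3 x : ℝ) + (if updateRule i j = 3 then 1 else 0) - (if i = 3 then 1 else 0)))]
  rw [Finset.sum_congr rfl hinner]
  norm_num [updateRule, Finset.sum_insert, Finset.mem_insert, Finset.mem_singleton,
    Fintype.card_prod, Fintype.card_fin]
  set a := (count n 1 x : ℝ)
  set b := (count n 2 x : ℝ)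
  set c := (count n 3 x : ℝ)
  have habc' : a + b + c ≠ 0 := by rw [habc]; exact hn
  rw [← habc]
  field_simp
  ring

end KnAsync15
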